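/- Let k, m, u > 0 and set y₃ = (√(1+4k) − 1)/(2k) and u₀ = m·y₃. Consider the equilibrium equations x/(1+ky) − xy = 0 and xy² − my + u = 0. (i) The point (0, u/m) is always a solution. (ii) If u < u₀, there is exactly one solution with x > 0, y > 0, namely (x₃, y₃) with x₃ = (m·y₃ − u)/y₃², and x₃ > 0. (iii) If u ≥ u₀, there is no solution with x > 0, y > 0. -/

import Mathlib

/-- Equilibria of `dx/dt = x/(1+ky) - xy`, `dy/dt = xy² - my + u`:
(i) `(0, u/m)` is always a solution; (ii) if `u < u₀ := m·y₃` there is exactly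
one positive solution, namely `(x₃, y₃)`; (iii) if `u ≥ u₀` there is no
positive solution. -/
theorem stmt5 (k m u : ℝ) (hk : 0 < k) (hm : 0 < m) (hu : 0 < u)
    (y₃ u₀ x₃ : ℝ)
    (hy₃ : y₃ = (Real.sqrt (1 + 4 * k) - 1) / (2 * k))
    (hu₀ : u₀ = m * y₃)
    (hx₃ : x₃ = (m * y₃ - u) / y₃ ^ 2) :
    ((0 : ℝ) / (1 + k * (u / m)) - 0 * (u / m) = 0 ∧
        0 * (u / m) ^ 2 - m * (u / m) + u = 0) ∧
      (u < u₀ →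
        0 < x₃ ∧ 0 < y₃ ∧
          x₃ / (1 + k * y₃) - x₃ * y₃ = 0 ∧
          x₃ * y₃ ^ 2 - m * y₃ + u = 0 ∧
          ∀ x y : ℝ, 0 < x → 0 < y →
            x / (1 + k * y) - x * y = 0 → x * y ^ 2 - m * y + u = 0 →
              x = x₃ ∧ y = y₃) ∧
      (u₀ ≤ u →
        ∀ x y : ℝ, 0 < x → 0 < y →
          ¬(x / (1 + k * y) - x * y = 0 ∧ x * y ^ 2 - m * y + u = 0)) := by
  have hs2 : Real.sqrt (1 + 4 * k) ^ 2 = 1 + 4 * k := Real.sq_sqrt (by linarith)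
  have hs1 : 1 < Real.sqrt (1 + 4 * k) := by
    nlinarith [Real.sqrt_nonneg (1 + 4 * k)]
  have hy3pos : 0 < y₃ := by
    rw [hy₃]
    exact div_pos (by linarith) (by linarith)
  have hq : k * y₃ ^ 2 + y₃ - 1 = 0 := by
    rw [hy₃]; field_simp; nlinarith [(by rw [mul_comm k 4]; exact hs2 : Real.sqrt (1 + k * 4) ^ 2 = 1 + k * 4)]
  have h1y : 0 < 1 + k * y₃ := by positivity
  -- uniqueness of positive root of k y² + y − 1 = 0
  have huniq : ∀ y : ℝ, 0 < y → k * y ^ 2 + y - 1 = 0 → y = y₃ := by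
    intro y hy hyq
    have : (y - y₃) * (k * (y + y₃) + 1) = 0 := by nlinarith
    have hpos : 0 < k * (y + y₃) + 1 := by positivity
    rcases mul_eq_zero.1 this with h | h
    · linarith
    · linarith
  refine ⟨⟨by ring_nf, by field_simp; ring⟩, ?_, ?_⟩
  · intro hlt
    rw [hu₀] at hlt
    have hx3pos : 0 < x₃ := by
      rw [hx₃]
      exact div_pos (by linarith) (by positivity)
    have hx3eq : x₃ * y₃ ^ 2 = m * y₃ - u := by
      rw [hx₃]; field_simp
    refine ⟨hx3pos, hy3pos, ?_, by linarith, ?_⟩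
    · have : y₃ * (1 + k * y₃) = 1 := by nlinarith
      field_simp
      nlinarith
    · intro x y hx hy h1 h2
      have h1y' : 0 < 1 + k * y := by positivity
      have heq : x * (1 - y * (1 + k * y)) = 0 := by
        field_simp at h1
        linear_combination h1
      have hyy : k * y ^ 2 + y - 1 = 0 := by
        rcases mul_eq_zero.1 heq with h | h
        · linarith
        · linear_combination -h
      have hyeq : y = y₃ := huniq y hy hyy
      rw [hyeq] at h2
      refine ⟨?_, hyeq⟩
      have hxy : x * y₃ ^ 2 = x₃ * y₃ ^ 2 := by linarith
      have hy2 : (0:ℝ) < y₃ ^ 2 := by positivity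
      exact mul_right_cancel₀ (ne_of_gt hy2) hxy
  · intro hge x y hx hy ⟨h1, h2⟩
    rw [hu₀] at hge
    have h1y' : 0 < 1 + k * y := by positivity
    have heq : x * (1 - y * (1 + k * y)) = 0 := by
      field_simp at h1
      linear_combination h1
    have hyy : k * y ^ 2 + y - 1 = 0 := by
      rcases mul_eq_zero.1 heq with h | h
      · linarith
      · linear_combination -h
    have hyeq : y = y₃ := huniq y hy hyy
    rw [hyeq] at h2
    have : 0 < x * y₃ ^ 2 := by positivity
    linarith
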